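/- Let δ ∈ (0,1) be a real number and let n, N, ℓ, k be positive integers with N ≥ 10·k·n^{(1−δ)ℓ} and k ≥ 20. Let G be a simple graph on vertex set Fin n that contains a clique of size ⌈n^δ⌉. Sample N independent uniformly random functions f_1,…,f_N : Fin ℓ → Fin n, let S_i be the image of f_i, and let G' be the graph on vertex set Fin N in which distinct i, j are adjacent iff S_i ∪ S_j is a clique in G. Then the probability that G' contains a clique of size k is at least 0.9. -/

import Mathlib

open Finset

lemma sum_prod_coords {N : ℕ} {A : Type*} [Fintype A] (g : Fin N → A → ℝ) :
    ∑ f : Fin N → A, ∏ i, g i (f i) = ∏ i, ∑ a, g i a := by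
  classical
  rw [← Fintype.piFinset_univ, Finset.sum_prod_piFinset]

lemma sum_marked {N : ℕ} {A : Type*} [Fintype A] (I : Finset (Fin N)) (ind : A → ℝ) :
    ∑ f : Fin N → A, ∏ i ∈ I, ind (f i)
      = (∑ a, ind a) ^ I.card * (Fintype.card A : ℝ) ^ (N - I.card) := by
  classical
  have h1 : ∀ f : Fin N → A, ∏ i ∈ I, ind (f i)
      = ∏ i : Fin N, (if i ∈ I then ind (f i) else 1) := by
    intro f
    rw [Finset.prod_ite_mem, Finset.univ_inter]
  simp only [h1]
  rw [sum_prod_coords (fun i a => if i ∈ I then ind a else 1)]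
  have h2 : ∀ i : Fin N, (∑ a, if i ∈ I then ind a else 1)
      = if i ∈ I then (∑ a, ind a) else (Fintype.card A : ℝ) := by
    intro i; split_ifs <;> simp
  rw [Finset.prod_congr rfl fun i _ => h2 i, ← Finset.prod_mul_prod_compl I]
  rw [Finset.prod_congr rfl (fun i hi => if_pos hi),
      Finset.prod_congr rfl (fun i hi => if_neg (Finset.mem_compl.mp hi)),
      Finset.prod_const, Finset.prod_const, Finset.card_compl, Fintype.card_fin]

lemma moment1 {N : ℕ} {A : Type*} [Fintype A] (ind : A → ℝ) :
    ∑ f : Fin N → A, ∑ i, ind (f i)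
      = (N : ℝ) * ((∑ a, ind a) * (Fintype.card A : ℝ) ^ (N - 1)) := by
  classical
  rw [Finset.sum_comm]
  have h : ∀ i : Fin N, ∑ f : Fin N → A, ind (f i)
      = (∑ a, ind a) * (Fintype.card A : ℝ) ^ (N - 1) := by
    intro i
    have := sum_marked {i} ind
    simpa using this
  rw [Finset.sum_congr rfl fun i _ => h i, Finset.sum_const, Finset.card_univ,
    Fintype.card_fin, nsmul_eq_mul]

lemma moment2 {N : ℕ} {A : Type*} [Fintype A] (ind : A → ℝ)
    (hind : ∀ a, ind a * ind a = ind a) :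
    ∑ f : Fin N → A, (∑ i, ind (f i)) ^ 2
      = (N : ℝ) * ((∑ a, ind a) * (Fintype.card A : ℝ) ^ (N - 1))
        + (N : ℝ) * ((N - 1 : ℕ) : ℝ)
          * ((∑ a, ind a) ^ 2 * (Fintype.card A : ℝ) ^ (N - 2)) := by
  classical
  have expand : ∀ f : Fin N → A, (∑ i, ind (f i)) ^ 2
      = ∑ i, ∑ j, ind (f i) * ind (f j) := by
    intro f; rw [sq, Finset.sum_mul_sum]
  simp only [expand]
  rw [Finset.sum_comm]
  have swap2 : ∀ i : Fin N, ∑ f : Fin N → A, ∑ j, ind (f i) * ind (f j)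
      = ∑ j, ∑ f : Fin N → A, ind (f i) * ind (f j) := fun i => Finset.sum_comm
  rw [Finset.sum_congr rfl fun i _ => swap2 i]
  have inner : ∀ i j : Fin N, ∑ f : Fin N → A, ind (f i) * ind (f j)
      = if i = j then (∑ a, ind a) * (Fintype.card A : ℝ) ^ (N - 1)
        else (∑ a, ind a) ^ 2 * (Fintype.card A : ℝ) ^ (N - 2) := by
    intro i j
    by_cases hij : i = j
    · subst hij
      simp only [if_pos rfl, hind]
      simpa using sum_marked {i} ind
    · rw [if_neg hij]
      have key : ∀ f : Fin N → A, ind (f i) * ind (f j) = ∏ l ∈ ({i, j} : Finset (Fin N)), ind (f l) := by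
        intro f; rw [Finset.prod_pair hij]
      simp only [key]
      rw [sum_marked ({i, j} : Finset (Fin N)) ind, Finset.card_pair hij]
  rw [Finset.sum_congr rfl fun i _ => Finset.sum_congr rfl fun j _ => inner i j]
  have row : ∀ i : Fin N, (∑ j : Fin N, if i = j then (∑ a, ind a) * (Fintype.card A : ℝ) ^ (N - 1)
        else (∑ a, ind a) ^ 2 * (Fintype.card A : ℝ) ^ (N - 2))
      = (∑ a, ind a) * (Fintype.card A : ℝ) ^ (N - 1)
        + ((N - 1 : ℕ) : ℝ) * ((∑ a, ind a) ^ 2 * (Fintype.card A : ℝ) ^ (N - 2)) := by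
    intro i
    rw [← Finset.add_sum_erase _ _ (Finset.mem_univ i), if_pos rfl]
    congr 1
    rw [Finset.sum_congr rfl fun j hj => if_neg (Ne.symm (Finset.ne_of_mem_erase hj)),
      Finset.sum_const, Finset.card_erase_of_mem (Finset.mem_univ i), Finset.card_univ,
      Fintype.card_fin, nsmul_eq_mul]
  rw [Finset.sum_congr rfl fun i _ => row i, Finset.sum_add_distrib, Finset.sum_const,
    Finset.sum_const, Finset.card_univ, Fintype.card_fin, nsmul_eq_mul, nsmul_eq_mul]
  ring

lemma var_le {N' : ℕ} {A : Type*} [Fintype A] (hA : 0 < Fintype.card A)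
    (ind : A → ℝ) (hind : ∀ a, ind a * ind a = ind a) (hnn : ∀ a, 0 ≤ ind a) :
    ∑ f : Fin (N' + 2) → A,
        ((∑ i, ind (f i)) - ((N' + 2 : ℕ) : ℝ) * ((∑ a, ind a) / (Fintype.card A : ℝ))) ^ 2
      ≤ (Fintype.card A : ℝ) ^ (N' + 2)
        * (((N' + 2 : ℕ) : ℝ) * ((∑ a, ind a) / (Fintype.card A : ℝ))) := by
  classical
  set T : ℝ := (Fintype.card A : ℝ) with hTdef
  set S : ℝ := ∑ a, ind a with hSdef
  set μ : ℝ := ((N' + 2 : ℕ) : ℝ) * (S / T) with hμdef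
  have hT : (0 : ℝ) < T := by rw [hTdef]; exact_mod_cast hA
  have hS : 0 ≤ S := Finset.sum_nonneg fun a _ => hnn a
  have e1 : ∀ f : Fin (N' + 2) → A,
      ((∑ i, ind (f i)) - μ) ^ 2 = (∑ i, ind (f i)) ^ 2 - 2 * μ * (∑ i, ind (f i)) + μ ^ 2 :=
    fun f => by ring
  rw [Finset.sum_congr rfl fun f _ => e1 f, Finset.sum_add_distrib, Finset.sum_sub_distrib,
    ← Finset.mul_sum, Finset.sum_const, Finset.card_univ]
  have hcard : (Fintype.card (Fin (N' + 2) → A) : ℝ) = T ^ (N' + 2) := by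
    rw [hTdef]; push_cast [Fintype.card_fun, Fintype.card_fin]; ring
  have hM1 := moment1 (N := N' + 2) ind
  have hM2 := moment2 (N := N' + 2) ind hind
  have h1 : (N' + 2) - 1 = N' + 1 := rfl
  have h2 : (N' + 2) - 2 = N' := rfl
  rw [h1] at hM1
  rw [h1, h2] at hM2
  rw [hM1, hM2, nsmul_eq_mul, hcard]
  have key : ((N' + 2 : ℕ) : ℝ) * (S * T ^ (N' + 1))
        + ((N' + 2 : ℕ) : ℝ) * ((N' + 1 : ℕ) : ℝ) * (S ^ 2 * T ^ N')
        - 2 * μ * (((N' + 2 : ℕ) : ℝ) * (S * T ^ (N' + 1)))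
        + T ^ (N' + 2) * μ ^ 2
      = ((N' + 2 : ℕ) : ℝ) * S * T ^ (N' + 1) - ((N' + 2 : ℕ) : ℝ) * S ^ 2 * T ^ N' := by
    rw [hμdef]
    field_simp
    push_cast
    ring
  rw [key]
  have hR : T ^ (N' + 2) * μ = ((N' + 2 : ℕ) : ℝ) * S * T ^ (N' + 1) := by
    rw [hμdef]; field_simp; ring
  rw [hR]
  have : 0 ≤ ((N' + 2 : ℕ) : ℝ) * S ^ 2 * T ^ N' := by positivity
  linarith

lemma count_small {N' : ℕ} {A : Type*} [Fintype A] (hA : 0 < Fintype.card A)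
    (ind : A → ℝ) (hind : ∀ a, ind a * ind a = ind a) (hnn : ∀ a, 0 ≤ ind a)
    (k : ℕ) (hk : 20 ≤ k)
    (hμ : 10 * (k : ℝ) ≤ ((N' + 2 : ℕ) : ℝ) * ((∑ a, ind a) / (Fintype.card A : ℝ))) :
    ((Finset.univ.filter fun f : Fin (N' + 2) → A => (∑ i, ind (f i)) < (k : ℝ)).card : ℝ)
      ≤ 0.1 * (Fintype.card A : ℝ) ^ (N' + 2) := by
  classical
  set T : ℝ := (Fintype.card A : ℝ) with hTdef
  set S : ℝ := ∑ a, ind a with hSdef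
  set μ : ℝ := ((N' + 2 : ℕ) : ℝ) * (S / T) with hμdef
  have hT : (0 : ℝ) < T := by rw [hTdef]; exact_mod_cast hA
  have hk0 : (20 : ℝ) ≤ (k : ℝ) := by exact_mod_cast hk
  have hμ200 : (200 : ℝ) ≤ μ := by linarith
  have hμk : (k : ℝ) < μ := by linarith
  set B := Finset.univ.filter fun f : Fin (N' + 2) → A => (∑ i, ind (f i)) < (k : ℝ) with hB
  have step1 : (B.card : ℝ) * (μ - k) ^ 2 ≤ ∑ f ∈ B, ((∑ i, ind (f i)) - μ) ^ 2 := by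
    rw [← nsmul_eq_mul, ← Finset.sum_const]
    apply Finset.sum_le_sum
    intro f hf
    have hXf : (∑ i, ind (f i)) < (k : ℝ) := (Finset.mem_filter.mp hf).2
    nlinarith [hXf, hμk]
  have step2 : ∑ f ∈ B, ((∑ i, ind (f i)) - μ) ^ 2
      ≤ ∑ f : Fin (N' + 2) → A, ((∑ i, ind (f i)) - μ) ^ 2 := by
    apply Finset.sum_le_sum_of_subset_of_nonneg (Finset.subset_univ B)
    intro f _ _; positivity
  have step3 := var_le (N' := N') hA ind hind hnn
  have hchain : (B.card : ℝ) * (μ - k) ^ 2 ≤ T ^ (N' + 2) * μ := by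
    calc (B.card : ℝ) * (μ - k) ^ 2 ≤ _ := step1
      _ ≤ _ := step2
      _ ≤ T ^ (N' + 2) * μ := step3
  have hquad : 10 * μ ≤ (μ - k) ^ 2 := by nlinarith [hμ, hk0, hμ200]
  have hTN : (0 : ℝ) ≤ T ^ (N' + 2) := by positivity
  have hsq : (0 : ℝ) < (μ - k) ^ 2 := by
    have h : (0 : ℝ) < μ - k := by linarith
    positivity
  have hfinal : (B.card : ℝ) * (μ - k) ^ 2 ≤ (0.1 * T ^ (N' + 2)) * (μ - k) ^ 2 := by
    nlinarith [mul_le_mul_of_nonneg_left hquad hTN, hchain]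
  exact le_of_mul_le_mul_right hfinal hsq


theorem stmt_0 (δ : ℝ) (hδ : δ ∈ Set.Ioo (0 : ℝ) 1)
    (n N ℓ k : ℕ) (hn : 0 < n) (hN : 0 < N) (hℓ : 0 < ℓ) (hk : 20 ≤ k)
    (hNlb : (N : ℝ) ≥ 10 * k * (n : ℝ) ^ ((1 - δ) * ℓ))
    (G : SimpleGraph (Fin n))
    (hclique : ∃ S : Finset (Fin n), G.IsNClique ⌈(n : ℝ) ^ δ⌉₊ S) :
    ((Nat.card {f : Fin N → Fin ℓ → Fin n //
        ∃ S : Finset (Fin N),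
          (SimpleGraph.fromRel (fun i j =>
            G.IsClique ((Finset.image (f i) Finset.univ ∪ Finset.image (f j) Finset.univ :
              Finset (Fin n)) : Set (Fin n)))).IsNClique k S} : ℝ)
      / (Nat.card (Fin N → Fin ℓ → Fin n) : ℝ)) ≥ 0.9 := by
  classical
  obtain ⟨hδ0, hδ1⟩ := hδ
  obtain ⟨C, hCclique, hCcard⟩ := hclique
  have hn0 : (0 : ℝ) < (n : ℝ) := by exact_mod_cast hn
  have hn1 : (1 : ℝ) ≤ (n : ℝ) := by exact_mod_cast hn
  set ind : (Fin ℓ → Fin n) → ℝ := fun a => if ∀ x, a x ∈ C then 1 else 0 with hinddef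
  have hind : ∀ a, ind a * ind a = ind a := by
    intro a; by_cases h : ∀ x, a x ∈ C <;> simp [hinddef, h]
  have hnn : ∀ a, 0 ≤ ind a := by
    intro a; by_cases h : ∀ x, a x ∈ C <;> simp [hinddef, h]
  have hcardA : Fintype.card (Fin ℓ → Fin n) = n ^ ℓ := by simp
  have hA : 0 < Fintype.card (Fin ℓ → Fin n) := by
    rw [hcardA]; exact pow_pos hn ℓ
  have hT : (0 : ℝ) < (Fintype.card (Fin ℓ → Fin n) : ℝ) := by exact_mod_cast hA
  -- value of the indicator sum
  have hScount : (∑ a : Fin ℓ → Fin n, ind a) = ((C.card : ℝ)) ^ ℓ := by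
    rw [hinddef]
    rw [Finset.sum_boole]
    norm_cast
    rw [← Fintype.card_subtype,
      Fintype.card_congr (Equiv.subtypePiEquivPi (p := fun _ b => b ∈ C))]
    simp
  -- lower bound on the mean
  have hmlb : (n : ℝ) ^ δ ≤ (C.card : ℝ) := by
    rw [hCcard]; exact Nat.le_ceil _
  have hq : (n : ℝ) ^ (-((1 - δ) * ℓ))
      ≤ (∑ a : Fin ℓ → Fin n, ind a) / (Fintype.card (Fin ℓ → Fin n) : ℝ) := by
    rw [hScount]
    have h1 : (n : ℝ) ^ (δ * ℓ) ≤ (C.card : ℝ) ^ ℓ := by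
      calc (n : ℝ) ^ (δ * ℓ) = ((n : ℝ) ^ δ) ^ (ℓ : ℝ) := Real.rpow_mul hn0.le δ ℓ
        _ = ((n : ℝ) ^ δ) ^ ℓ := Real.rpow_natCast _ ℓ
        _ ≤ (C.card : ℝ) ^ ℓ := pow_le_pow_left₀ (Real.rpow_nonneg hn0.le δ) hmlb ℓ
    have h2 : (Fintype.card (Fin ℓ → Fin n) : ℝ) = (n : ℝ) ^ ((ℓ : ℕ) : ℝ) := by
      rw [hcardA, Real.rpow_natCast]; push_cast; ring
    rw [h2]
    calc (n : ℝ) ^ (-((1 - δ) * ℓ)) = (n : ℝ) ^ (δ * ℓ - ℓ) := by ring_nf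
      _ = (n : ℝ) ^ (δ * ℓ) / (n : ℝ) ^ ((ℓ : ℕ) : ℝ) := Real.rpow_sub hn0 _ _
      _ ≤ (C.card : ℝ) ^ ℓ / (n : ℝ) ^ ((ℓ : ℕ) : ℝ) := by
          apply div_le_div_of_nonneg_right h1 ?_ |>.trans_eq rfl
          positivity
  have hk0 : (0 : ℝ) ≤ 10 * (k : ℝ) := by positivity
  have hμ : 10 * (k : ℝ)
      ≤ (N : ℝ) * ((∑ a : Fin ℓ → Fin n, ind a) / (Fintype.card (Fin ℓ → Fin n) : ℝ)) := by
    calc 10 * (k : ℝ)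
        = (10 * k * (n : ℝ) ^ ((1 - δ) * ℓ)) * (n : ℝ) ^ (-((1 - δ) * ℓ)) := by
          rw [mul_assoc, ← Real.rpow_add hn0, add_neg_cancel, Real.rpow_zero, mul_one]
      _ ≤ (N : ℝ) * ((∑ a : Fin ℓ → Fin n, ind a) / (Fintype.card (Fin ℓ → Fin n) : ℝ)) := by
          apply mul_le_mul hNlb hq (Real.rpow_nonneg hn0.le _) (Nat.cast_nonneg N)
  -- N ≥ 2
  have hrp1 : (1 : ℝ) ≤ (n : ℝ) ^ ((1 - δ) * ℓ) := by
    have := Real.rpow_le_rpow_of_exponent_le hn1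
      (show (0:ℝ) ≤ (1 - δ) * ℓ from mul_nonneg (by linarith) (Nat.cast_nonneg ℓ))
    simpa using this
  have hk20 : (20 : ℝ) ≤ (k : ℝ) := by exact_mod_cast hk
  have hN200 : (200 : ℝ) ≤ (N : ℝ) := by nlinarith
  have hN2 : 2 ≤ N := by exact_mod_cast hN200.trans' (by norm_num : (2:ℝ) ≤ 200)
  obtain ⟨N', rfl⟩ : ∃ N', N = N' + 2 := ⟨N - 2, by omega⟩
  -- event inclusion: many good coordinates gives a k-clique
  set P : (Fin (N' + 2) → Fin ℓ → Fin n) → Prop := fun f =>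
    ∃ S : Finset (Fin (N' + 2)),
      (SimpleGraph.fromRel (fun i j =>
        G.IsClique ((Finset.image (f i) Finset.univ ∪ Finset.image (f j) Finset.univ :
          Finset (Fin n)) : Set (Fin n)))).IsNClique k S with hPdef
  have hgood : ∀ f : Fin (N' + 2) → Fin ℓ → Fin n,
      (k : ℝ) ≤ ∑ i, ind (f i) → P f := by
    intro f hf
    have hXcard : ∑ i, ind (f i)
        = (((Finset.univ.filter fun i : Fin (N' + 2) => ∀ x, f i x ∈ C).card : ℕ) : ℝ) := by
      rw [hinddef]; exact Finset.sum_boole _ _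
    have hk' : k ≤ (Finset.univ.filter fun i : Fin (N' + 2) => ∀ x, f i x ∈ C).card := by
      exact_mod_cast hXcard ▸ hf
    obtain ⟨S, hSsub, hScard⟩ := Finset.exists_subset_card_eq hk'
    refine ⟨S, fun i hi j hj hij => ?_, hScard⟩
    rw [SimpleGraph.fromRel_adj]
    refine ⟨hij, Or.inl ?_⟩
    have hi' : ∀ x, f i x ∈ C := (Finset.mem_filter.mp (hSsub (Finset.mem_coe.mp hi))).2
    have hj' : ∀ x, f j x ∈ C := (Finset.mem_filter.mp (hSsub (Finset.mem_coe.mp hj))).2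
    refine hCclique.subset ?_
    rw [Finset.coe_subset.symm] at *
    intro v hv
    simp only [Finset.coe_union, Set.mem_union, Finset.coe_image, Set.mem_image] at hv
    rcases hv with ⟨x, -, rfl⟩ | ⟨x, -, rfl⟩
    · exact hi' x
    · exact hj' x
  -- Chebyshev count
  have hcount := count_small (N' := N') hA ind hind hnn k hk hμ
  have hsubset : (Finset.univ.filter fun f => ¬ P f)
      ⊆ (Finset.univ.filter fun f : Fin (N' + 2) → Fin ℓ → Fin n =>
          (∑ i, ind (f i)) < (k : ℝ)) := by
    intro f hf
    rw [Finset.mem_filter] at hf ⊢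
    refine ⟨Finset.mem_univ f, ?_⟩
    by_contra h
    push_neg at h
    exact hf.2 (hgood f h)
  have hbad : ((Finset.univ.filter fun f => ¬ P f).card : ℝ)
      ≤ 0.1 * (Fintype.card (Fin ℓ → Fin n) : ℝ) ^ (N' + 2) :=
    le_trans (by exact_mod_cast Finset.card_le_card hsubset) hcount
  have hsplit := Finset.card_filter_add_card_filter_not
    (s := (Finset.univ : Finset (Fin (N' + 2) → Fin ℓ → Fin n))) P
  rw [Finset.card_univ] at hsplit
  have hcardΩ : (Fintype.card (Fin (N' + 2) → Fin ℓ → Fin n) : ℝ)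
      = (Fintype.card (Fin ℓ → Fin n) : ℝ) ^ (N' + 2) := by
    rw [Fintype.card_fun, Fintype.card_fin]; push_cast; ring
  have hNatcard : (Nat.card {f : Fin (N' + 2) → Fin ℓ → Fin n // P f} : ℝ)
      = ((Finset.univ.filter P).card : ℝ) := by
    norm_cast
    rw [Nat.card_eq_fintype_card, Fintype.card_subtype]
  have hNatcardΩ : (Nat.card (Fin (N' + 2) → Fin ℓ → Fin n) : ℝ)
      = (Fintype.card (Fin ℓ → Fin n) : ℝ) ^ (N' + 2) := by
    rw [Nat.card_eq_fintype_card, hcardΩ]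
  rw [ge_iff_le, hNatcardΩ]
  rw [le_div_iff₀ (by positivity)]
  have hsplit' : ((Finset.univ.filter P).card : ℝ)
      + ((Finset.univ.filter fun f => ¬ P f).card : ℝ)
      = (Fintype.card (Fin ℓ → Fin n) : ℝ) ^ (N' + 2) := by
    rw [← hcardΩ]; exact_mod_cast hsplit
  rw [hNatcard]
  linarith
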